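/- Let G be a strongly connected aperiodic digraph on n ≥ 1 nodes (allowing loops). Then for any two nodes i and j and any integer k ≥ n² − 2n + 2, there exists a walk in G from i to j of length exactly k. -/

import Mathlib

open Matrix Filter

/-- Row-stochastic matrix: nonnegative entries and row sums equal to 1. -/
def Stochastic {n : ℕ} (A : Matrix (Fin n) (Fin n) ℝ) : Prop :=
  (∀ i j, 0 ≤ A i j) ∧ ∀ i, ∑ j, A i j = 1

/-- There is a walk of length `k` from `i` to `j` in the digraph with edge relation `E`. -/
def HasWalk {n : ℕ} (E : Fin n → Fin n → Prop) (i j : Fin n) (k : ℕ) : Prop :=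
  ∃ f : ℕ → Fin n, f 0 = i ∧ f k = j ∧ ∀ m < k, E (f m) (f (m + 1))

/-- The gcd of the lengths of closed walks at `i` (which all stay inside the strongly
connected component of `i`) is 1.  Equivalently, the component of `i` is aperiodic. -/
def AperiodicAt {n : ℕ} (E : Fin n → Fin n → Prop) (i : Fin n) : Prop :=
  ∀ d : ℕ, (∀ k, 0 < k → HasWalk E i i k → d ∣ k) → d = 1

/-- `backProd A l m = A (l+m) ⬝ A (l+m-1) ⬝ ⋯ ⬝ A (l+1)`, so that
`backProd A l (k-l)` is the partial product `P(k,l)` and `backProd A 0 k = P(k)`. -/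
def backProd {n : ℕ} (A : ℕ → Matrix (Fin n) (Fin n) ℝ) (l : ℕ) : ℕ → Matrix (Fin n) (Fin n) ℝ
  | 0 => 1
  | m + 1 => A (l + m + 1) * backProd A l m

/-- Vector seminorm: sup-norm distance to the line spanned by the all-ones vector. -/
noncomputable def sn {n : ℕ} (x : Fin n → ℝ) : ℝ :=
  ⨅ c : ℝ, ‖x - Function.const (Fin n) c‖

/-- Induced matrix seminorm `‖A‖ = sup { ‖Ax‖/‖x‖ : ‖x‖ ≠ 0 }`. -/
noncomputable def msn {n : ℕ} (A : Matrix (Fin n) (Fin n) ℝ) : ℝ :=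
  sSup {r : ℝ | ∃ x : Fin n → ℝ, sn x ≠ 0 ∧ r = sn (A.mulVec x) / sn x}

/-- `mu P j` = minimum of the positive entries of column `j` of `P`. -/
noncomputable def mu {n : ℕ} (P : Matrix (Fin n) (Fin n) ℝ) (j : Fin n) : ℝ :=
  sInf {v : ℝ | ∃ i, 0 < P i j ∧ P i j = v}

/-- Completely reducible: whenever `A i j > 0` there is a directed walk from `j`
back to `i` in `G(A)`; i.e. no edges between distinct strongly connected components. -/
def CompRed {n : ℕ} (A : Matrix (Fin n) (Fin n) ℝ) : Prop :=
  ∀ i j, 0 < A i j → ∃ k, HasWalk (fun a b => 0 < A a b) j i k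

namespace WieAux

variable {n : ℕ} {R : Fin n → Fin n → Prop}

theorem hw_refl (R : Fin n → Fin n → Prop) (x : Fin n) : HasWalk R x x 0 :=
  ⟨fun _ => x, rfl, rfl, fun m hm => absurd hm (Nat.not_lt_zero m)⟩

theorem hw_zero {x y : Fin n} (h : HasWalk R x y 0) : x = y := by
  obtain ⟨f, h0, hk, _⟩ := h; rw [← h0, ← hk]

theorem hw_single {x y : Fin n} (h : R x y) : HasWalk R x y 1 := by
  refine ⟨fun m => if m = 0 then x else y, by simp, by simp, ?_⟩
  intro m hm
  interval_cases m
  simpa using h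

theorem hw_trans {x y z : Fin n} {a b : ℕ} (h1 : HasWalk R x y a) (h2 : HasWalk R y z b) :
    HasWalk R x z (a + b) := by
  obtain ⟨f, hf0, hfa, hfe⟩ := h1
  obtain ⟨g, hg0, hgb, hge⟩ := h2
  refine ⟨fun m => if m < a then f m else g (m - a), ?_, ?_, ?_⟩
  · by_cases h : 0 < a
    · simpa [h] using hf0
    · have ha : a = 0 := by omega
      have : x = y := by rw [← hf0, ← hfa, ha]
      simp [ha, hg0, this]
  · have : ¬ (a + b < a) := by omega
    simp [this, hgb]
  · intro m hm
    by_cases h1m : m < a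
    · by_cases h2m : m + 1 < a
      · simpa [h1m, h2m] using hfe m h1m
      · have hma : m + 1 = a := by omega
        have : g (m + 1 - a) = f (m + 1) := by
          rw [hma]; simp [hg0, ← hfa]
        show R (if m < a then f m else g (m - a)) (if m + 1 < a then f (m + 1) else g (m + 1 - a))
        rw [if_pos h1m, if_neg h2m, this]
        exact hfe m h1m
    · have h2m : ¬ (m + 1 < a) := by omega
      have e1 : m - a < b := by omega
      have e2 : m + 1 - a = (m - a) + 1 := by omega
      simpa [h1m, h2m, e2] using hge (m - a) e1

theorem hw_splice {m a c : ℕ} {f : ℕ → Fin n} (hf : ∀ x < m, R (f x) (f (x + 1)))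
    (hac : a + c ≤ m) (heq : f (a + c) = f a) :
    HasWalk R (f 0) (f m) (m - c) := by
  refine ⟨fun x => if x ≤ a then f x else f (x + c), by simp, ?_, ?_⟩
  · by_cases h : m - c ≤ a
    · have h1 : m - c = a := by omega
      have h2 : m = a + c := by omega
      simp [h, h1, ← h2] at heq ⊢
      rw [heq]
    · have : m - c + c = m := by omega
      simp [h, this]
  · intro x hx
    by_cases h1 : x + 1 ≤ a
    · have h0 : x ≤ a := by omega
      simpa [h0, h1] using hf x (by omega)
    · by_cases h0 : x ≤ a
      · have hxa : x = a := by omega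
        have h2 : ¬ (x + 1 ≤ a) := h1
        have : f x = f (x + c) := by rw [hxa, ← heq]
        simp only [h0, h2, if_pos, if_neg, if_true, if_false]
        rw [this]
        have e : x + 1 + c = (x + c) + 1 := by omega
        rw [e]
        exact hf (x + c) (by omega)
      · have e : x + 1 + c = (x + c) + 1 := by omega
        simp only [h0, h1, if_neg, if_false]
        rw [e]
        exact hf (x + c) (by omega)

theorem hw_shorten {x y : Fin n} (m : ℕ) (h : HasWalk R x y m) :
    ∃ m' < n, HasWalk R x y m' := by
  induction m using Nat.strong_induction_on with
  | _ m ih =>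
    by_cases hm : m < n
    · exact ⟨m, hm, h⟩
    · obtain ⟨f, hf0, hfm, hfe⟩ := h
      have hni : ¬ Function.Injective (fun p : Fin (n + 1) => f p) := by
        intro hinj
        have := Fintype.card_le_of_injective _ hinj
        simp at this
      rw [Function.not_injective_iff] at hni
      obtain ⟨p, q, hpq, hne⟩ := hni
      rcases Ne.lt_or_gt hne with hlt | hlt
      · have heq : f (↑p + (↑q - ↑p)) = f ↑p := by
          have : (↑p : ℕ) + (↑q - ↑p) = ↑q := by omega
          rw [this, hpq]
        have hw := hw_splice hfe (a := ↑p) (c := ↑q - ↑p) (by omega) heq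
        rw [hf0, hfm] at hw
        exact ih (m - (↑q - ↑p)) (by omega) hw
      · have heq : f (↑q + (↑p - ↑q)) = f ↑q := by
          have : (↑q : ℕ) + (↑p - ↑q) = ↑p := by omega
          rw [this, ← hpq]
        have hw := hw_splice hfe (a := ↑q) (c := ↑p - ↑q) (by omega) heq
        rw [hf0, hfm] at hw
        exact ih (m - (↑p - ↑q)) (by omega) hw

theorem hw_snoc {x y : Fin n} {m : ℕ} (h : HasWalk R x y (m + 1)) :
    ∃ z, HasWalk R x z m ∧ R z y := by
  obtain ⟨f, hf0, hfm, hfe⟩ := h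
  refine ⟨f m, ⟨f, hf0, rfl, fun p hp => hfe p (by omega)⟩, ?_⟩
  rw [← hfm]; exact hfe m (by omega)

theorem hw_iter {w : Fin n} (h : R w w) : ∀ c, HasWalk R w w c := by
  intro c
  induction c with
  | zero => exact hw_refl R w
  | succ c ih => exact hw_trans ih (hw_single h)

theorem hw_unchop {s : ℕ} {x y : Fin n} {E : Fin n → Fin n → Prop} {M : ℕ}
    (h : HasWalk (fun a b => HasWalk E a b s) x y M) : HasWalk E x y (M * s) := by
  induction M generalizing y with
  | zero => have := hw_zero h; rw [this] at *; simpa using hw_refl E y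
  | succ M ih =>
    obtain ⟨z, h1, h2⟩ := hw_snoc h
    have := hw_trans (ih h1) h2
    simpa [Nat.succ_mul] using this

theorem hw_chop {s : ℕ} {x y : Fin n} {E : Fin n → Fin n → Prop} {M : ℕ}
    (h : HasWalk E x y (M * s)) : HasWalk (fun a b => HasWalk E a b s) x y M := by
  obtain ⟨f, hf0, hfm, hfe⟩ := h
  refine ⟨fun m => f (m * s), by simpa using hf0, by simpa using hfm, ?_⟩
  intro m hm
  refine ⟨fun p => f (m * s + p), by simp, ?_, ?_⟩
  · have : m * s + s = (m + 1) * s := by ring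
    simp [this]
  · intro p hp
    have : m * s + p < M * s := by
      calc m * s + p < m * s + s := by omega
      _ = (m + 1) * s := by ring
      _ ≤ M * s := Nat.mul_le_mul_right s (by omega)
    have e : m * s + (p + 1) = (m * s + p) + 1 := by omega
    show E (f (m * s + p)) (f (m * s + (p + 1)))
    rw [e]
    exact hfe (m * s + p) this

theorem semigroup_cofinite (P : ℕ → Prop) (h0 : P 0)
    (hadd : ∀ a b, P a → P b → P (a + b))
    (hgcd : ∀ d : ℕ, (∀ m, 0 < m → P m → d ∣ m) → d = 1) :
    ∃ N, ∀ m, N ≤ m → P m := by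
  have hsmul : ∀ (c a : ℕ), P a → P (c * a) := by
    intro c a ha
    induction c with
    | zero => simpa using h0
    | succ c ih => have := hadd _ _ ih ha; rw [Nat.succ_mul]; exact this
  set S : Set ℤ := {x : ℤ | ∃ m : ℕ, P m ∧ (m : ℤ) = x} with hS
  set H : AddSubgroup ℤ := AddSubgroup.closure S with hH
  have key : ∀ x ∈ H, ∃ p q : ℕ, P p ∧ P q ∧ x = (p : ℤ) - (q : ℤ) := by
    intro x hx
    induction hx using AddSubgroup.closure_induction with
    | mem x hx => obtain ⟨m, hm, rfl⟩ := hx; exact ⟨m, 0, hm, h0, by simp⟩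
    | zero => exact ⟨0, 0, h0, h0, by simp⟩
    | add x y hx hy ihx ihy =>
      obtain ⟨p, q, hp, hq, rfl⟩ := ihx
      obtain ⟨p', q', hp', hq', rfl⟩ := ihy
      exact ⟨p + p', q + q', hadd _ _ hp hp', hadd _ _ hq hq', by push_cast; ring⟩
    | neg x hx ihx =>
      obtain ⟨p, q, hp, hq, rfl⟩ := ihx
      exact ⟨q, p, hq, hp, by ring⟩
  obtain ⟨g, hg⟩ := Int.subgroup_cyclic H
  have hgdvd : ∀ m : ℕ, 0 < m → P m → g.natAbs ∣ m := by
    intro m hm hPm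
    have hmem : (m : ℤ) ∈ H := AddSubgroup.subset_closure ⟨m, hPm, rfl⟩
    rw [hg, AddSubgroup.mem_closure_singleton] at hmem
    obtain ⟨t, ht⟩ := hmem
    have : g ∣ (m : ℤ) := ⟨t, by rw [← ht, smul_eq_mul, mul_comm]⟩
    exact Int.natAbs_dvd_natAbs.mpr (by simpa using this)
  have hg1 : g.natAbs = 1 := hgcd _ hgdvd
  have h1H : (1 : ℤ) ∈ H := by
    have hgH : g ∈ H := by
      rw [hg]; exact AddSubgroup.mem_closure_singleton_self g
    rcases Int.natAbs_eq g with h | h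
    · rw [hg1] at h; norm_num at h; rwa [← h]
    · rw [hg1] at h
      have := AddSubgroup.neg_mem H hgH
      rw [h] at this; simpa using this
  obtain ⟨p, q, hp, hq, hpq⟩ := key 1 h1H
  have hpq' : p = q + 1 := by omega
  by_cases hq0 : q = 0
  · refine ⟨0, fun m _ => ?_⟩
    have h1 : P 1 := by rw [hpq', hq0] at hp; exact hp
    have := hsmul m 1 h1
    simpa using this
  · refine ⟨q * q, fun m hm => ?_⟩
    have hqpos : 0 < q := Nat.pos_of_ne_zero hq0
    set α := m % q with hα
    have hαq : α < q := Nat.mod_lt m hqpos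
    have hdq : q ≤ m / q := by
      rw [Nat.le_div_iff_mul_le hqpos]; exact hm
    obtain ⟨β, hβ⟩ : ∃ β, m / q = β + α := ⟨m / q - α, by omega⟩
    have hmd : α + q * (m / q) = m := Nat.mod_add_div m q
    rw [hβ] at hmd
    have hmeq : m = α * (q + 1) + β * q := by rw [← hmd]; ring
    rw [hmeq]
    refine hadd _ _ ?_ ?_
    · have := hsmul α p hp; rwa [hpq'] at this
    · exact hsmul β q hq

theorem closed_cofinite {E : Fin n → Fin n → Prop}
    (hsc : ∀ i j : Fin n, ∃ k, HasWalk E i j k)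
    (hap : ∀ d : ℕ, (∀ k, 0 < k → (∃ i, HasWalk E i i k) → d ∣ k) → d = 1)
    (v : Fin n) : ∃ N, ∀ m, N ≤ m → HasWalk E v v m := by
  refine semigroup_cofinite (fun m => HasWalk E v v m) (hw_refl E v)
    (fun a b ha hb => hw_trans ha hb) ?_
  intro d hd
  refine hap d ?_
  rintro kk hkk ⟨u, hu⟩
  obtain ⟨a, ha⟩ := hsc v u
  obtain ⟨b, hb⟩ := hsc u v
  have h1 : HasWalk E v v (a + b) := hw_trans ha hb
  have h2 : HasWalk E v v (a + (kk + b)) := hw_trans ha (hw_trans hu hb)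
  rcases Nat.eq_zero_or_pos (a + b) with h | h
  · have ha0 : a = 0 := by omega
    have : v = u := by rw [ha0] at ha; exact hw_zero ha
    rw [← this] at hu
    exact hd kk hkk hu
  · have d1 := hd _ h h1
    have d2 := hd _ (by omega) h2
    have : (a + (kk + b)) - (a + b) = kk := by omega
    have := Nat.dvd_sub d2 d1
    rwa [show (a + (kk + b)) - (a + b) = kk by omega] at this

end WieAux

open WieAux in
theorem stmt9 {n : ℕ} (hn : 1 ≤ n) (E : Fin n → Fin n → Prop)
    (hsc : ∀ i j : Fin n, ∃ k, HasWalk E i j k)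
    (hap : ∀ d : ℕ, (∀ k, 0 < k → (∃ i, HasWalk E i i k) → d ∣ k) → d = 1)
    (i j : Fin n) (k : ℕ) (hk : n ^ 2 + 2 ≤ k + 2 * n) :
    HasWalk E i j k := by
  classical
  -- there is a positive-length closed walk
  have hex : ∃ c, 0 < c ∧ ∃ i, HasWalk E i i c := by
    by_contra h
    push_neg at h
    have := hap 2 (fun kk hkk hw => by obtain ⟨i', hi'⟩ := hw; exact absurd hi' (h kk hkk i'))
    omega
  by_cases hn1 : n < 2
  · -- n = 1
    have hsub : ∀ a b : Fin n, a = b := fun a b => Fin.ext (by omega)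
    obtain ⟨c, hc, i₀, f, hf0, hfc, hfe⟩ := hex
    have hE : E i i := by
      have := hfe 0 hc
      rwa [hsub (f 0) i, hsub (f 1) i] at this
    exact ⟨fun _ => i, rfl, hsub i j ▸ rfl, fun m hm => hE⟩
  push_neg at hn1
  obtain ⟨n2, rfl⟩ : ∃ m, n = m + 2 := ⟨n - 2, by omega⟩
  -- minimal closed walk length s
  obtain ⟨s, ⟨hs_pos, i₀, f, hf0, hfs, hfe⟩, hs_min⟩ :
      ∃ s, (0 < s ∧ ∃ i, HasWalk E i i s) ∧
        ∀ c, 0 < c → (∃ i, HasWalk E i i c) → s ≤ c :=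
    ⟨sInf {c | 0 < c ∧ ∃ i, HasWalk E i i c}, Nat.sInf_mem hex,
      fun c h1 h2 => Nat.sInf_le ⟨h1, h2⟩⟩
  have hinj : ∀ a b, a < s → b < s → f a = f b → a = b := by
    have key : ∀ a b, a ≤ b → b < s → f a = f b → a = b := by
      intro a b hab hbs heq
      by_contra hne
      have heq' : f (a + (b - a)) = f a := by rw [show a + (b - a) = b by omega, heq]
      have hw := hw_splice hfe (a := a) (c := b - a) (by omega) heq'
      rw [hf0, hfs] at hw
      have : s ≤ s - (b - a) := hs_min _ (by omega) ⟨i₀, hw⟩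
      omega
    intro a b ha hb heq
    rcases le_total a b with h | h
    · exact key a b h hb heq
    · exact (key b a h ha heq.symm).symm
  set F : ℕ → Fin (n2 + 2) := fun m => f (m % s) with hF_def
  have hF : ∀ m, E (F m) (F (m + 1)) := by
    intro m
    have hr : m % s < s := Nat.mod_lt m hs_pos
    have h1 : (m + 1) % s = (m % s + 1) % s := by
      have h2 : m + 1 = (m % s + 1) + s * (m / s) := by
        have := Nat.mod_add_div m s; omega
      rw [h2, Nat.add_mul_mod_self_left]
    by_cases hss : m % s + 1 = s
    · have h3 : (m % s + 1) % s = 0 := by rw [hss, Nat.mod_self]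
      show E (f (m % s)) (f ((m + 1) % s))
      rw [h1, h3]
      have := hfe (m % s) hr
      rwa [hss, hfs, ← hf0] at this
    · have h3 : (m % s + 1) % s = m % s + 1 := Nat.mod_eq_of_lt (by omega)
      show E (f (m % s)) (f ((m + 1) % s))
      rw [h1, h3]
      exact hfe (m % s) hr
  have hFs : ∀ m, F (m + s) = F m := fun m => by simp [hF_def, Nat.add_mod_right]
  have hFwalk : ∀ t u, HasWalk E (F t) (F (t + u)) u := by
    intro t u
    refine ⟨fun m => F (t + m), by simp, rfl, fun m hm => ?_⟩
    show E (F (t + m)) (F (t + (m + 1)))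
    have : t + (m + 1) = (t + m) + 1 := by omega
    rw [this]
    exact hF (t + m)
  have hFloop : ∀ t, HasWalk E (F t) (F t) s := by
    intro t
    have := hFwalk t s
    rwa [hFs t] at this
  have hsn : s ≤ n2 + 2 := by
    by_contra hc
    push_neg at hc
    have hinj' : Function.Injective (fun a : Fin s => f a) := by
      intro a b hab
      exact Fin.ext (hinj _ _ a.isLt b.isLt hab)
    have := Fintype.card_le_of_injective _ hinj'
    simp at this
    omega
  have hslt : s < n2 + 2 := by
    rcases lt_or_eq_of_le hsn with h | h
    · exact h
    exfalso
    -- s = n: f is a bijection on Fin n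
    have hinj' : Function.Injective (fun a : Fin (n2 + 2) => f a.val) := by
      intro a b hab
      exact Fin.ext (hinj _ _ (by rw [h]; exact a.isLt) (by rw [h]; exact b.isLt) hab)
    have hsurj : ∀ w : Fin (n2 + 2), ∃ b : Fin (n2 + 2), f b.val = w := by
      intro w
      obtain ⟨b, hb⟩ := (Finite.injective_iff_surjective.mp hinj') w
      exact ⟨b, hb⟩
    -- edge determinism
    have hdet : ∀ (a : ℕ) (w : Fin (n2 + 2)), E (F a) w → w = F (a + 1) := by
      intro a w hEw
      obtain ⟨b, hb⟩ := hsurj w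
      have hbs : (b : ℕ) < s := by rw [h]; exact b.isLt
      set t := (a + s - b.val) % s with ht_def
      have hts : t < s := Nat.mod_lt _ hs_pos
      have hbt : (b.val + t) % s = a % s := by
        calc (b.val + (a + s - b.val) % s) % s = (b.val + (a + s - b.val)) % s :=
              Nat.add_mod_mod _ _ _
        _ = (a + s) % s := by rw [show b.val + (a + s - b.val) = a + s by omega]
        _ = a % s := Nat.add_mod_right a s
      -- closed walk at F a of length 1 + t
      have hcw : HasWalk E (F a) (F a) (1 + t) := by
        refine ⟨fun x => if x = 0 then F a else F (b.val + (x - 1)), by simp, ?_, ?_⟩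
        · have : (1 : ℕ) + t ≠ 0 := by omega
          simp only [this, if_neg, if_false]
          show F (b.val + (1 + t - 1)) = F a
          rw [show (1 : ℕ) + t - 1 = t by omega]
          show f ((b.val + t) % s) = f (a % s)
          rw [hbt]
        · intro x hx
          by_cases hx0 : x = 0
          · subst hx0
            simp only [if_pos, if_neg, one_ne_zero, if_false, reduceIte]
            show E (F a) (F (b.val + (1 - 1)))
            have : F (b.val + (1 - 1)) = w := by
              rw [show b.val + (1 - 1) = b.val by omega]
              show f (b.val % s) = w
              rw [Nat.mod_eq_of_lt hbs, hb]
            rw [this]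
            exact hEw
          · have hx1 : x + 1 ≠ 0 := by omega
            simp only [hx0, hx1, if_neg, if_false, reduceIte]
            show E (F (b.val + (x - 1))) (F (b.val + (x + 1 - 1)))
            rw [show b.val + (x + 1 - 1) = (b.val + (x - 1)) + 1 by omega]
            exact hF _
      have hst : s ≤ 1 + t := hs_min _ (by omega) ⟨F a, hcw⟩
      have htval : t = s - 1 := by omega
      -- conclude w = F (a + 1)
      have : (b.val) % s = (a + 1) % s := by
        calc b.val % s = (b.val + s) % s := (Nat.add_mod_right _ _).symm
        _ = (b.val + t + 1) % s := by rw [show b.val + t + 1 = b.val + s by omega]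
        _ = ((b.val + t) % s + 1) % s := (Nat.mod_add_mod _ _ _).symm
        _ = (a % s + 1) % s := by rw [hbt]
        _ = (a + 1) % s := Nat.mod_add_mod _ _ _
      rw [← hb]
      show f b.val = f ((a + 1) % s)
      rw [← Nat.mod_eq_of_lt hbs, this]
    -- every walk follows the cycle
    have htrack : ∀ (mm : ℕ) (g : ℕ → Fin (n2 + 2)), (∀ x < mm, E (g x) (g (x + 1))) →
        ∀ a, g 0 = F a → g mm = F (a + mm) := by
      intro mm
      induction mm with
      | zero => intro g _ a h0; simpa using h0
      | succ mm ih =>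
        intro g hg a h0
        have h1 : g mm = F (a + mm) := ih g (fun x hx => hg x (by omega)) a h0
        have h2 := hg mm (by omega)
        rw [h1] at h2
        have := hdet (a + mm) (g (mm + 1)) h2
        rw [this, show a + mm + 1 = a + (mm + 1) by omega]
    -- all closed walks have length divisible by n
    have hdvd : (n2 + 2 : ℕ) = 1 := by
      apply hap
      rintro kk hkk ⟨u, g, hg0, hgk, hge⟩
      obtain ⟨b, hb⟩ := hsurj u
      have hbs : (b : ℕ) < s := by rw [h]; exact b.isLt
      have hFb : F b.val = u := by
        show f (b.val % s) = u
        rw [Nat.mod_eq_of_lt hbs, hb]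
      have h1 : g kk = F (b.val + kk) := htrack kk g hge b.val (by rw [hg0, ← hFb])
      have h2 : f ((b.val + kk) % s) = f (b.val % s) := by
        show F (b.val + kk) = f (b.val % s)
        rw [← h1, hgk, ← hFb]
      have h3 : (b.val + kk) % s = b.val % s :=
        hinj _ _ (Nat.mod_lt _ hs_pos) (Nat.mod_lt _ hs_pos) h2
      have h4 : s ∣ kk := by
        have h5 := (Nat.modEq_iff_dvd' (show b.val ≤ b.val + kk by omega)).mp h3.symm
        rwa [show (b.val + kk) - b.val = kk by omega] at h5
      rw [← h]
      exact h4
    omega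
  -- Step A: shortest walk from i to the cycle
  obtain ⟨d₀, ⟨t, g, hg0, hgd, hge⟩, hd_min⟩ :
      ∃ d, (∃ t, HasWalk E i (F t) d) ∧ ∀ d', (∃ t, HasWalk E i (F t) d') → d ≤ d' := by
    have hne : ∃ d, ∃ t, HasWalk E i (F t) d := by
      obtain ⟨d, hd⟩ := hsc i (F 0); exact ⟨d, 0, hd⟩
    exact ⟨sInf {d | ∃ t, HasWalk E i (F t) d}, Nat.sInf_mem hne,
      fun d' hd' => Nat.sInf_le hd'⟩
  have havoid : ∀ x, x < d₀ → ∀ c, g x ≠ F c := by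
    intro x hx c hxc
    have := hd_min x ⟨c, ⟨g, hg0, hxc, fun p hp => hge p (by omega)⟩⟩
    omega
  have hginj : ∀ x y, x < d₀ → y < d₀ → g x = g y → x = y := by
    have key : ∀ x y, x ≤ y → y < d₀ → g x = g y → x = y := by
      intro x y hxy hyd heq
      by_contra hne
      have heq' : g (x + (y - x)) = g x := by rw [show x + (y - x) = y by omega, heq]
      have hw := hw_splice hge (a := x) (c := y - x) (by omega) heq'
      rw [hg0, hgd] at hw
      have := hd_min (d₀ - (y - x)) ⟨t, hw⟩
      omega
    intro x y hx hy heq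
    rcases le_total x y with hc | hc
    · exact key x y hc hy heq
    · exact (key y x hc hx heq.symm).symm
  -- cardinality: d₀ + s ≤ n
  have hcard : d₀ + s ≤ n2 + 2 := by
    set φ : Fin d₀ ⊕ Fin s → Fin (n2 + 2) :=
      Sum.elim (fun x => g x.val) (fun c => f c.val) with hφ_def
    have hφ : Function.Injective φ := by
      rintro (x | x) (y | y) hxy
      · simp only [hφ_def, Sum.elim_inl] at hxy
        exact congrArg Sum.inl (Fin.ext (hginj _ _ x.isLt y.isLt hxy))
      · simp only [hφ_def, Sum.elim_inl, Sum.elim_inr] at hxy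
        exfalso
        refine havoid x.val x.isLt y.val ?_
        show g x.val = f (y.val % s)
        rw [Nat.mod_eq_of_lt y.isLt, hxy]
      · simp only [hφ_def, Sum.elim_inl, Sum.elim_inr] at hxy
        exfalso
        refine havoid y.val y.isLt x.val ?_
        show g y.val = f (x.val % s)
        rw [Nat.mod_eq_of_lt x.isLt, hxy]
      · simp only [hφ_def, Sum.elim_inr] at hxy
        exact congrArg Sum.inr (Fin.ext (hinj _ _ x.isLt y.isLt hxy))
    have := Fintype.card_le_of_injective φ hφ
    simpa using this
  -- Step B: walk from i to the cycle with total length ≡ k (mod s)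
  set u := (k + d₀ * (s - 1)) % s with hu_def
  have hus : u < s := Nat.mod_lt _ hs_pos
  have hmodeq : (d₀ + u) % s = k % s := by
    have h1 : d₀ + d₀ * (s - 1) = d₀ * s := by
      obtain ⟨s', rfl⟩ : ∃ s', s = s' + 1 := ⟨s - 1, by omega⟩
      simp [Nat.mul_succ]; ring
    calc (d₀ + (k + d₀ * (s - 1)) % s) % s = (d₀ + (k + d₀ * (s - 1))) % s :=
          Nat.add_mod_mod _ _ _
    _ = (k + d₀ * s) % s := by rw [show d₀ + (k + d₀ * (s - 1)) = k + (d₀ + d₀ * (s-1)) by ring, h1]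
    _ = k % s := Nat.add_mul_mod_self_right k d₀ s
  have haw : HasWalk E i (F (t + u)) (d₀ + u) := hw_trans ⟨g, hg0, hgd, hge⟩ (hFwalk t u)
  have ha_le : d₀ + u ≤ n2 + 1 := by omega
  -- arithmetic
  have hk' : n2 * n2 + 2 * n2 + 2 ≤ k := by
    have hexp : (n2 + 2) ^ 2 = n2 * n2 + 4 * n2 + 4 := by ring
    omega
  have hka : d₀ + u ≤ k := by nlinarith
  have hdvd2 : s ∣ k - (d₀ + u) := (Nat.modEq_iff_dvd' hka).mp hmodeq
  obtain ⟨L, hL⟩ := hdvd2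
  have hLn : n2 + 1 ≤ L := by
    by_contra hc
    push_neg at hc
    have m1 : s * L ≤ s * n2 := Nat.mul_le_mul_left s (by omega)
    have m2 : s * n2 ≤ (n2 + 1) * n2 := Nat.mul_le_mul_right n2 (by omega)
    have m4 : (n2 + 1) * n2 = n2 * n2 + n2 := by ring
    have hk2 : k = s * L + (d₀ + u) := by
      have := Nat.eq_add_of_sub_eq hka hL
      omega
    nlinarith
  -- Step D: walk from the cycle vertex to j of length s * L
  obtain ⟨N, hN⟩ := closed_cofinite hsc hap (F (t + u))
  obtain ⟨b, hb⟩ := hsc (F (t + u)) j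
  set m₁ := (s - b % s) % s + s * (N + 1) with hm₁_def
  have hm₁N : N ≤ m₁ := by
    have h5 : N + 1 ≤ s * (N + 1) := Nat.le_mul_of_pos_left (N + 1) hs_pos
    omega
  have hwj : HasWalk E (F (t + u)) j (m₁ + b) := hw_trans (hN m₁ hm₁N) hb
  have hb1 : b % s + s * (b / s) = b := Nat.mod_add_div b s
  obtain ⟨e, he⟩ : s ∣ (s - b % s) % s + b % s := by
    by_cases hbz : b % s = 0
    · simp [hbz]
    · have h1 : s - b % s < s := by
        have := Nat.mod_lt b hs_pos; omega
      rw [Nat.mod_eq_of_lt h1]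
      rw [show s - b % s + b % s = s by have := Nat.mod_lt b hs_pos; omega]
  have hMeq : m₁ + b = s * (e + (N + 1) + b / s) := by
    calc m₁ + b = (s - b % s) % s + s * (N + 1) + (b % s + s * (b / s)) := by
          rw [hb1, hm₁_def]
    _ = s * e + s * (N + 1) + s * (b / s) := by rw [← he]; ring
    _ = s * (e + (N + 1) + b / s) := by ring
  have hwj' : HasWalk E (F (t + u)) j ((e + (N + 1) + b / s) * s) := by
    rw [Nat.mul_comm, ← hMeq]; exact hwj
  have hEs := hw_chop hwj'
  obtain ⟨M', hM'n, hM'w⟩ := hw_shorten _ hEs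
  have hM'L : M' ≤ L := by omega
  have hpad : HasWalk (fun a b => HasWalk E a b s) (F (t + u)) j L := by
    have hloop := hw_iter (R := fun a b => HasWalk E a b s) (hFloop (t + u)) (L - M')
    have := hw_trans hloop hM'w
    rwa [show L - M' + M' = L by omega] at this
  have hfin : HasWalk E (F (t + u)) j (L * s) := hw_unchop hpad
  have hfin' : HasWalk E (F (t + u)) j (k - (d₀ + u)) := by
    rwa [Nat.mul_comm, ← hL] at hfin
  have := hw_trans haw hfin'
  rwa [show d₀ + u + (k - (d₀ + u)) = k by omega] at this
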